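/- (1) For all strictly positive formulas φ, ψ: if 𝒯(φ) ↪* 𝒯(ψ) then φ ⊢ ψ is derivable in RC. (2) For all modal trees T, T': if ℱ(T) ⊢ ℱ(T') is derivable in RC, then T ↪* T'. -/

import Mathlib

namespace TRC

/-- Strictly positive formulas of `L⁺`. -/
inductive SPF : Type where
  | top : SPF
  | var : ℕ → SPF
  | dia : ℕ → SPF → SPF
  | and : SPF → SPF → SPF

/-- The sequent system `K⁺`. -/
inductive KPlus : SPF → SPF → Prop where
  | id (φ) : KPlus φ φ
  | topI (φ) : KPlus φ .top
  | cut {φ ψ χ} : KPlus φ ψ → KPlus ψ χ → KPlus φ χ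
  | andE₁ (φ ψ) : KPlus (.and φ ψ) φ
  | andE₂ (φ ψ) : KPlus (.and φ ψ) ψ
  | andI {φ ψ χ} : KPlus φ ψ → KPlus φ χ → KPlus φ (.and ψ χ)
  | dist {φ ψ} (α) : KPlus φ ψ → KPlus (.dia α φ) (.dia α ψ)

/-- The Reflection Calculus `RC`. -/
inductive RC : SPF → SPF → Prop where
  | id (φ) : RC φ φ
  | topI (φ) : RC φ .top
  | cut {φ ψ χ} : RC φ ψ → RC ψ χ → RC φ χ
  | andE₁ (φ ψ) : RC (.and φ ψ) φ
  | andE₂ (φ ψ) : RC (.and φ ψ) ψ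
  | andI {φ ψ χ} : RC φ ψ → RC φ χ → RC φ (.and ψ χ)
  | dist {φ ψ} (α) : RC φ ψ → RC (.dia α φ) (.dia α ψ)
  | trans (α φ) : RC (.dia α (.dia α φ)) (.dia α φ)
  | mono {α β} (φ) : β < α → RC (.dia α φ) (.dia β φ)
  | jax {α β} (φ ψ) : β < α → RC (.and (.dia α φ) (.dia β ψ)) (.dia α (.and φ (.dia β ψ)))

/-- Modal depth. -/
def SPF.md : SPF → ℕ
  | .top => 0
  | .var _ => 0
  | .dia _ φ => φ.md + 1
  | .and φ ψ => max φ.md ψ.md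

/-- Modal trees. -/
inductive MTree : Type where
  | node : List ℕ → List (ℕ × MTree) → MTree

/-- Sum of modal trees. -/
def MTree.sum : MTree → MTree → MTree
  | .node Δ₁ Γ₁, .node Δ₂ Γ₂ => .node (Δ₁ ++ Δ₂) (Γ₁ ++ Γ₂)

mutual
/-- Height of a modal tree. -/
def MTree.height : MTree → ℕ
  | .node _ Γ => heightL Γ
def heightL : List (ℕ × MTree) → ℕ
  | [] => 0
  | (_, S) :: Γ => max (S.height + 1) (heightL Γ)
end

mutual
/-- `T.IsPos k`: the (1-indexed) string `k` is a position of `T`. -/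
def MTree.IsPos : MTree → List ℕ → Prop
  | _, [] => True
  | .node _ Γ, i :: k => isPosL Γ i k
def isPosL : List (ℕ × MTree) → ℕ → List ℕ → Prop
  | [], _, _ => False
  | _ :: _, 0, _ => False
  | (_, S) :: _, 1, k => S.IsPos k
  | _ :: Γ, n+2, k => isPosL Γ (n+1) k
end

mutual
/-- Subtree of `T` at position `k` (returning a default junk value off positions). -/
def MTree.subtree : MTree → List ℕ → MTree
  | T, [] => T
  | .node Δ Γ, i :: k => subtreeL (.node Δ Γ) Γ i k
def subtreeL : MTree → List (ℕ × MTree) → ℕ → List ℕ → MTree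
  | d, [], _, _ => d
  | d, _ :: _, 0, _ => d
  | _, (_, S) :: _, 1, k => S.subtree k
  | d, _ :: Γ, n+2, k => subtreeL d Γ (n+1) k
end

mutual
/-- `T.replace S k`: replace the subtree of `T` at position `k` by `S`. -/
def MTree.replace : MTree → MTree → List ℕ → MTree
  | _, S, [] => S
  | .node Δ Γ, S, i :: k => .node Δ (replaceL Γ S i k)
def replaceL : List (ℕ × MTree) → MTree → ℕ → List ℕ → List (ℕ × MTree)
  | [], _, _, _ => []
  | Γ, _, 0, _ => Γ
  | (α, C) :: Γ, S, 1, k => (α, C.replace S k) :: Γ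
  | x :: Γ, S, n+2, k => x :: replaceL Γ S (n+1) k
end

/-- Names of the eight rewriting rules of TRC. -/
inductive Rule : Type where
  | rhoP | rhoM | sigma | piP | piM | four | lam | jay
  deriving DecidableEq

/-- One rewriting step performed at the root. -/
inductive RootStep : Rule → MTree → MTree → Prop where
  | rhoP {Δ Γ i p} (hi : 1 ≤ i) (h : Δ[i-1]? = some p) :
      RootStep .rhoP (.node Δ Γ) (.node (p :: Δ) Γ)
  | rhoM {Δ Γ i} (hi : 1 ≤ i) (h : i - 1 < Δ.length) :
      RootStep .rhoM (.node Δ Γ) (.node (Δ.eraseIdx (i-1)) Γ)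
  | sigma {Δ Γ i j x y} (hi : 1 ≤ i) (hj : 1 ≤ j) (hij : i ≠ j)
      (hx : Γ[i-1]? = some x) (hy : Γ[j-1]? = some y) :
      RootStep .sigma (.node Δ Γ) (.node Δ ((Γ.set (j-1) x).set (i-1) y))
  | piP {Δ Γ i x} (hi : 1 ≤ i) (hx : Γ[i-1]? = some x) :
      RootStep .piP (.node Δ Γ) (.node Δ (x :: Γ))
  | piM {Δ Γ i} (hi : 1 ≤ i) (h : i - 1 < Γ.length) :
      RootStep .piM (.node Δ Γ) (.node Δ (Γ.eraseIdx (i-1)))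
  | four {Δ Γ i j β Δt Γt S} (hi : 1 ≤ i) (hj : 1 ≤ j)
      (hΓ : Γ[i-1]? = some (β, MTree.node Δt Γt)) (hΓt : Γt[j-1]? = some (β, S)) :
      RootStep .four (.node Δ Γ) (.node Δ (Γ.set (i-1) (β, S)))
  | lam {Δ Γ i α β S} (hi : 1 ≤ i) (hβ : β < α) (hΓ : Γ[i-1]? = some (α, S)) :
      RootStep .lam (.node Δ Γ) (.node Δ (Γ.set (i-1) (β, S)))
  | jay {Δ Γ i j α β Δt Γt S} (hi : 1 ≤ i) (hj : 1 ≤ j) (hij : i ≠ j) (hβ : β < α)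
      (hΓi : Γ[i-1]? = some (α, MTree.node Δt Γt)) (hΓj : Γ[j-1]? = some (β, S)) :
      RootStep .jay (.node Δ Γ)
        (.node Δ ((Γ.set (i-1) (α, MTree.node Δt (Γt ++ [(β, S)]))).eraseIdx (j-1)))

/-- One step of the rule `r`, applied at some position. -/
def StepR (r : Rule) (T T' : MTree) : Prop :=
  ∃ k S, T.IsPos k ∧ RootStep r (T.subtree k) S ∧ T' = T.replace S k

/-- One step of the rewriting relation `↪`. -/
def Step (T T' : MTree) : Prop := ∃ r, StepR r T T'

/-- The rewriting relation `↪*`. -/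
def Steps : MTree → MTree → Prop := Relation.ReflTransGen Step

/-- TRC-equivalence `↔*`. -/
def TEquiv (T T' : MTree) : Prop := Steps T T' ∧ Steps T' T

/-- `T ↪^Ω S` : rewriting applying the rules of `Ω` in order, one step each. -/
inductive StepsOf : List Rule → MTree → MTree → Prop where
  | nil (T) : StepsOf [] T T
  | cons {r Ω T U S} : StepR r T U → StepsOf Ω U S → StepsOf (r :: Ω) T S

def AtomicStep (T S : MTree) : Prop := StepR .rhoP T S ∨ StepR .rhoM T S
def DecreasingStep (T S : MTree) : Prop := StepR .piM T S ∨ StepR .four T S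
def ModalStep (T S : MTree) : Prop := StepR .lam T S ∨ StepR .jay T S

/-- Finite conjunctions (empty conjunction is `⊤`). -/
def bigAnd : List SPF → SPF
  | [] => .top
  | φ :: l => .and φ (bigAnd l)

mutual
/-- The embedding `ℱ` of modal trees into formulas. -/
def MTree.toFormula : MTree → SPF
  | .node Δ Γ => .and (bigAnd (Δ.map SPF.var)) (diamL Γ)
def diamL : List (ℕ × MTree) → SPF
  | [] => .top
  | (α, S) :: Γ => .and (.dia α S.toFormula) (diamL Γ)
end

/-- The embedding `𝒯` of formulas into modal trees. -/
def SPF.toTree : SPF → MTree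
  | .top => .node [] []
  | .var p => .node [p] []
  | .dia α φ => .node [] [(α, φ.toTree)]
  | .and φ ψ => φ.toTree.sum ψ.toTree

/-- Nonempty conjunction `φ₁ ∧ (φ₂ ∧ (… ∧ φₙ))`. -/
def conjNE : SPF → List SPF → SPF
  | φ, [] => φ
  | φ, ψ :: l => .and φ (conjNE ψ l)

end TRC
namespace TRC
open List

/-! ### RC conjunction machinery -/

theorem rc_bigAnd_of_mem {l : List SPF} {φ} (h : φ ∈ l) : RC (bigAnd l) φ := by
  induction l with
  | nil => simp at h
  | cons a l ih =>
    rcases mem_cons.mp h with h | h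
    · subst h; exact RC.andE₁ _ _
    · exact RC.cut (RC.andE₂ _ _) (ih h)

theorem rc_to_bigAnd {χ} {l : List SPF} (h : ∀ φ ∈ l, RC χ φ) : RC χ (bigAnd l) := by
  induction l with
  | nil => exact RC.topI _
  | cons a l ih => exact RC.andI (h a (by simp)) (ih fun φ hφ => h φ (by simp [hφ]))

theorem rc_diamL_of_mem {Γ : List (ℕ × MTree)} {α S} (h : (α, S) ∈ Γ) :
    RC (diamL Γ) (.dia α S.toFormula) := by
  induction Γ with
  | nil => simp at h
  | cons x Γ ih =>
    obtain ⟨β, C⟩ := x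
    rcases mem_cons.mp h with h | h
    · obtain ⟨rfl, rfl⟩ := Prod.mk.injEq .. ▸ h
      · simpa [diamL] using (RC.andE₁ (.dia α S.toFormula) (diamL Γ))
    · exact RC.cut (by simpa [diamL] using (RC.andE₂ (.dia β C.toFormula) (diamL Γ))) (ih h)

theorem rc_to_diamL {χ} {Γ : List (ℕ × MTree)}
    (h : ∀ x ∈ Γ, RC χ (.dia x.1 x.2.toFormula)) : RC χ (diamL Γ) := by
  induction Γ with
  | nil => exact RC.topI _
  | cons x Γ ih =>
    obtain ⟨β, C⟩ := x
    have : RC χ (.and (.dia β C.toFormula) (diamL Γ)) :=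
      RC.andI (h (β, C) (by simp)) (ih fun y hy => h y (by simp [hy]))
    simpa [diamL] using this

theorem rc_elim_var {Δ Γ p} (h : p ∈ Δ) : RC (MTree.node Δ Γ).toFormula (.var p) := by
  have : RC (MTree.node Δ Γ).toFormula (bigAnd (Δ.map .var)) := by
    simpa [MTree.toFormula] using RC.andE₁ (bigAnd (Δ.map .var)) (diamL Γ)
  exact RC.cut this (rc_bigAnd_of_mem (mem_map_of_mem (f := SPF.var) h))

theorem rc_elim_dia {Δ Γ} {x : ℕ × MTree} (h : x ∈ Γ) :
    RC (MTree.node Δ Γ).toFormula (.dia x.1 x.2.toFormula) := by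
  obtain ⟨α, S⟩ := x
  show RC _ (.dia α S.toFormula)
  have : RC (MTree.node Δ Γ).toFormula (diamL Γ) := by
    simpa [MTree.toFormula] using RC.andE₂ (bigAnd (Δ.map .var)) (diamL Γ)
  exact RC.cut this (rc_diamL_of_mem h)

theorem rc_node_intro {χ Δ Γ} (h1 : ∀ p ∈ Δ, RC χ (.var p))
    (h2 : ∀ x ∈ Γ, RC χ (.dia x.1 x.2.toFormula)) : RC χ (MTree.node Δ Γ).toFormula := by
  have hb : RC χ (bigAnd (Δ.map .var)) := by
    refine rc_to_bigAnd fun φ hφ => ?_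
    obtain ⟨p, hp, rfl⟩ := mem_map.mp hφ
    exact h1 p hp
  have : RC χ (.and (bigAnd (Δ.map .var)) (diamL Γ)) := RC.andI hb (rc_to_diamL h2)
  simpa [MTree.toFormula] using this

theorem rc_node_mono {Δ Γ Δ' Γ'} (h1 : ∀ p ∈ Δ', p ∈ Δ)
    (h2 : ∀ x ∈ Γ', RC (MTree.node Δ Γ).toFormula (.dia x.1 x.2.toFormula)) :
    RC (MTree.node Δ Γ).toFormula (MTree.node Δ' Γ').toFormula :=
  rc_node_intro (fun p hp => rc_elim_var (h1 p hp)) h2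

/-! ### Root soundness -/

theorem rootSound {r T U} (h : RootStep r T U) : RC T.toFormula U.toFormula := by
  cases h with
  | rhoP hi h =>
    refine rc_node_mono (fun p hp => ?_) (fun x hx => rc_elim_dia hx)
    rcases mem_cons.mp hp with rfl | hp
    · exact List.mem_of_getElem? h
    · exact hp
  | rhoM hi h =>
    exact rc_node_mono (fun p hp => mem_of_mem_eraseIdx hp)
      (fun x hx => rc_elim_dia hx)
  | sigma hi hj hij hx hy =>
    refine rc_node_mono (fun p hp => hp) (fun z hz => ?_)
    rcases mem_or_eq_of_mem_set hz with hz | rfl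
    · rcases mem_or_eq_of_mem_set hz with hz | rfl
      · exact rc_elim_dia hz
      · exact rc_elim_dia (List.mem_of_getElem? hx)
    · exact rc_elim_dia (List.mem_of_getElem? hy)
  | piP hi hx =>
    refine rc_node_mono (fun p hp => hp) (fun z hz => ?_)
    rcases mem_cons.mp hz with rfl | hz
    · exact rc_elim_dia (List.mem_of_getElem? hx)
    · exact rc_elim_dia hz
  | piM hi h =>
    exact rc_node_mono (fun p hp => hp)
      (fun x hx => rc_elim_dia (mem_of_mem_eraseIdx hx))
  | four hi hj hΓ hΓt =>
    rename_i Δ Γ i j β Δt Γt S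
    refine rc_node_mono (fun p hp => hp) (fun z hz => ?_)
    rcases mem_or_eq_of_mem_set hz with hz | rfl
    · exact rc_elim_dia hz
    · have h1 : RC (MTree.node Δ Γ).toFormula (.dia β (MTree.node Δt Γt).toFormula) :=
        rc_elim_dia (List.mem_of_getElem? hΓ)
      have h2 : RC (MTree.node Δt Γt).toFormula (.dia β S.toFormula) :=
        rc_elim_dia (List.mem_of_getElem? hΓt)
      exact RC.cut h1 (RC.cut (RC.dist β h2) (RC.trans β _))
  | lam hi hβ hΓ =>
    rename_i Δ Γ i α β S
    refine rc_node_mono (fun p hp => hp) (fun z hz => ?_)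
    rcases mem_or_eq_of_mem_set hz with hz | rfl
    · exact rc_elim_dia hz
    · exact RC.cut (rc_elim_dia (List.mem_of_getElem? hΓ)) (RC.mono _ hβ)
  | jay hi hj hij hβ hΓi hΓj =>
    rename_i Δ Γ i j α β Δt Γt S
    refine rc_node_mono (fun p hp => hp) (fun z hz => ?_)
    rcases mem_or_eq_of_mem_set (mem_of_mem_eraseIdx hz) with hz | rfl
    · exact rc_elim_dia hz
    · have hφ : RC (MTree.node Δ Γ).toFormula (.dia α (MTree.node Δt Γt).toFormula) :=
        rc_elim_dia (List.mem_of_getElem? hΓi)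
      have hψ : RC (MTree.node Δ Γ).toFormula (.dia β S.toFormula) :=
        rc_elim_dia (List.mem_of_getElem? hΓj)
      have hinner : RC (.and (MTree.node Δt Γt).toFormula (.dia β S.toFormula))
          (MTree.node Δt (Γt ++ [(β, S)])).toFormula := by
        refine rc_node_intro (fun p hp => RC.cut (RC.andE₁ _ _) (rc_elim_var hp))
          (fun x hx => ?_)
        rcases mem_append.mp hx with hx | hx
        · exact RC.cut (RC.andE₁ _ _) (rc_elim_dia hx)
        · simp at hx; subst hx; exact RC.andE₂ _ _
      exact RC.cut (RC.andI hφ hψ) (RC.cut (RC.jax _ _ hβ) (RC.dist α hinner))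

end TRC
namespace TRC
open List

/-! ### Position lemmas -/

theorem posL_of (L : List (ℕ × MTree)) {α C R k} (h : C.IsPos k) :
    isPosL (L ++ (α, C) :: R) (L.length + 1) k := by
  induction L with
  | nil => simpa [isPosL] using h
  | cons x L ih => simpa [isPosL] using ih

theorem subL_of (L : List (ℕ × MTree)) (α C R k d) :
    subtreeL d (L ++ (α, C) :: R) (L.length + 1) k = C.subtree k := by
  induction L with
  | nil => simp [subtreeL]
  | cons x L ih => simpa [subtreeL] using ih

theorem repL_of (L : List (ℕ × MTree)) (α C R k S) :
    replaceL (L ++ (α, C) :: R) S (L.length + 1) k = L ++ (α, C.replace S k) :: R := by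
  induction L with
  | nil => simp [replaceL]
  | cons x L ih => simpa [replaceL] using ih

theorem decompPos : ∀ (Γ : List (ℕ × MTree)) (i : ℕ) (k : List ℕ), isPosL Γ i k →
    ∃ L α C R, Γ = L ++ (α, C) :: R ∧ i = L.length + 1 ∧ C.IsPos k ∧
      (∀ d, subtreeL d Γ i k = C.subtree k) ∧
      (∀ S, replaceL Γ S i k = L ++ (α, C.replace S k) :: R) := by
  intro Γ
  induction Γ with
  | nil => intro i k h; simp [isPosL] at h
  | cons x Γ ih =>
    intro i k h
    match i with
    | 0 => simp [isPosL] at h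
    | 1 =>
      obtain ⟨α, C⟩ := x
      exact ⟨[], α, C, Γ, rfl, rfl, by simpa [isPosL] using h,
        fun d => by simp [subtreeL], fun S => by simp [replaceL]⟩
    | n + 2 =>
      have h' : isPosL Γ (n + 1) k := by simpa [isPosL] using h
      obtain ⟨L, α, C, R, rfl, hlen, hpos, hsub, hrep⟩ := ih (n + 1) k h'
      refine ⟨x :: L, α, C, R, rfl, by simp; omega, hpos, fun d => ?_, fun S => ?_⟩
      · rw [show x :: (L ++ (α, C) :: R) = (x :: L) ++ (α, C) :: R from rfl] at *
        simpa [subtreeL] using hsub d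
      · simpa [replaceL] using hrep S

/-! ### Context soundness -/

theorem ctxSound {S : MTree} : ∀ (k : List ℕ) (T : MTree), T.IsPos k →
    RC (T.subtree k).toFormula S.toFormula → RC T.toFormula (T.replace S k).toFormula := by
  intro k
  induction k with
  | nil => intro T _ h; simpa [MTree.subtree, MTree.replace] using h
  | cons i k ih =>
    intro T hpos h
    obtain ⟨Δ, Γ⟩ := T
    have hpos' : isPosL Γ i k := by simpa [MTree.IsPos] using hpos
    obtain ⟨L, α, C, R, rfl, hlen, hposC, hsub, hrep⟩ := decompPos Γ i k hpos'
    have hsubeq : (MTree.node Δ (L ++ (α, C) :: R)).subtree (i :: k) = C.subtree k := by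
      simp [MTree.subtree, hsub]
    have hC : RC C.toFormula (C.replace S k).toFormula := by
      refine ih C hposC ?_
      rwa [hsubeq] at h
    rw [show (MTree.node Δ (L ++ (α, C) :: R)).replace S (i :: k)
        = .node Δ (L ++ (α, C.replace S k) :: R) by simp [MTree.replace, hrep]]
    refine rc_node_mono (fun p hp => hp) (fun x hx => ?_)
    rcases mem_append.mp hx with hx | hx
    · exact rc_elim_dia (mem_append_left _ hx)
    · rcases mem_cons.mp hx with rfl | hx
      · exact RC.cut (rc_elim_dia (x := (α, C)) (mem_append_right _ mem_cons_self))
          (RC.dist α hC)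
      · exact rc_elim_dia (mem_append_right _ (mem_cons_of_mem _ hx))

theorem stepSound {T U} (h : Step T U) : RC T.toFormula U.toFormula := by
  obtain ⟨r, k, S, hpos, hroot, rfl⟩ := h
  exact ctxSound k T hpos (rootSound hroot)

theorem stepsSound {T U} (h : Steps T U) : RC T.toFormula U.toFormula := by
  induction h with
  | refl => exact RC.id _
  | tail _ h₂ ih => exact RC.cut ih (stepSound h₂)

/-! ### `φ ⊣⊢ ℱ(𝒯(φ))` -/

theorem rc_sum_elim₁ (T U : MTree) : RC (T.sum U).toFormula T.toFormula := by
  obtain ⟨Δ₁, Γ₁⟩ := T; obtain ⟨Δ₂, Γ₂⟩ := U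
  exact rc_node_mono (fun p hp => mem_append_left _ hp)
    (fun x hx => rc_elim_dia (mem_append_left _ hx))

theorem rc_sum_elim₂ (T U : MTree) : RC (T.sum U).toFormula U.toFormula := by
  obtain ⟨Δ₁, Γ₁⟩ := T; obtain ⟨Δ₂, Γ₂⟩ := U
  exact rc_node_mono (fun p hp => mem_append_right _ hp)
    (fun x hx => rc_elim_dia (mem_append_right _ hx))

theorem rc_sum_intro (T U : MTree) :
    RC (.and T.toFormula U.toFormula) ((T.sum U).toFormula) := by
  obtain ⟨Δ₁, Γ₁⟩ := T; obtain ⟨Δ₂, Γ₂⟩ := U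
  show RC _ (MTree.node (Δ₁ ++ Δ₂) (Γ₁ ++ Γ₂)).toFormula
  refine rc_node_intro (fun p hp => ?_) (fun x hx => ?_)
  · rcases mem_append.mp hp with hp | hp
    · exact RC.cut (RC.andE₁ _ _) (rc_elim_var hp)
    · exact RC.cut (RC.andE₂ _ _) (rc_elim_var hp)
  · rcases mem_append.mp hx with hx | hx
    · exact RC.cut (RC.andE₁ _ _) (rc_elim_dia hx)
    · exact RC.cut (RC.andE₂ _ _) (rc_elim_dia hx)

theorem rc_spf_pair (φ : SPF) :
    RC φ φ.toTree.toFormula ∧ RC φ.toTree.toFormula φ := by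
  induction φ with
  | top =>
    constructor
    · have : RC SPF.top (.and .top .top) := RC.andI (RC.topI _) (RC.topI _)
      simpa [SPF.toTree, MTree.toFormula, bigAnd, diamL] using this
    · exact RC.topI _
  | var p =>
    constructor
    · have : RC (SPF.var p) (.and (.and (.var p) .top) .top) :=
        RC.andI (RC.andI (RC.id _) (RC.topI _)) (RC.topI _)
      simpa [SPF.toTree, MTree.toFormula, bigAnd, diamL] using this
    · have : RC (.and (.and (SPF.var p) .top) .top) (SPF.var p) :=
        RC.cut (RC.andE₁ _ _) (RC.andE₁ _ _)
      simpa [SPF.toTree, MTree.toFormula, bigAnd, diamL] using this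
  | dia α φ ih =>
    constructor
    · have : RC (SPF.dia α φ) (.and .top (.and (.dia α φ.toTree.toFormula) .top)) :=
        RC.andI (RC.topI _) (RC.andI (RC.dist α ih.1) (RC.topI _))
      simpa [SPF.toTree, MTree.toFormula, bigAnd, diamL] using this
    · have : RC (.and .top (.and (.dia α φ.toTree.toFormula) .top)) (SPF.dia α φ) :=
        RC.cut (RC.andE₂ _ _) (RC.cut (RC.andE₁ _ _) (RC.dist α ih.2))
      simpa [SPF.toTree, MTree.toFormula, bigAnd, diamL] using this
  | and φ ψ ihφ ihψ =>
    constructor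
    · refine RC.cut (RC.andI (RC.cut (RC.andE₁ _ _) ihφ.1) (RC.cut (RC.andE₂ _ _) ihψ.1)) ?_
      simpa [SPF.toTree] using rc_sum_intro φ.toTree ψ.toTree
    · refine RC.andI ?_ ?_
      · exact RC.cut (by simpa [SPF.toTree] using rc_sum_elim₁ φ.toTree ψ.toTree) ihφ.2
      · exact RC.cut (by simpa [SPF.toTree] using rc_sum_elim₂ φ.toTree ψ.toTree) ihψ.2

theorem part1 {φ ψ : SPF} (h : Steps φ.toTree ψ.toTree) : RC φ ψ :=
  RC.cut (rc_spf_pair φ).1 (RC.cut (stepsSound h) (rc_spf_pair ψ).2)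

end TRC
namespace TRC
open List

/-! ### Basic step constructions -/

theorem step_root {r T U} (h : RootStep r T U) : Step T U :=
  ⟨r, [], U, by simp [MTree.IsPos], by simpa [MTree.subtree] using h, by simp [MTree.replace]⟩

theorem stepCtx {Δ : List ℕ} {L : List (ℕ × MTree)} {α C R C'} (h : Step C C') :
    Step (.node Δ (L ++ (α, C) :: R)) (.node Δ (L ++ (α, C') :: R)) := by
  obtain ⟨r, k, S, hpos, hroot, rfl⟩ := h
  refine ⟨r, (L.length + 1) :: k, S, ?_, ?_, ?_⟩
  · simpa [MTree.IsPos] using posL_of L hpos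
  · simpa [MTree.subtree, subL_of] using hroot
  · simp [MTree.replace, repL_of]

theorem stepsCtx {Δ : List ℕ} {L : List (ℕ × MTree)} {α C R C'} (h : Steps C C') :
    Steps (.node Δ (L ++ (α, C) :: R)) (.node Δ (L ++ (α, C') :: R)) :=
  Relation.ReflTransGen.lift (fun X => MTree.node Δ (L ++ (α, X) :: R))
    (fun _ _ hab => stepCtx hab) _ _ h

/-! ### getElem? helpers -/

theorem get_len {γ : Type _} : ∀ (M : List γ) (b : γ) (E : List γ),
    (M ++ (b :: E))[M.length]? = some b := by
  intro M
  induction M with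
  | nil => simp
  | cons x M ih =>
    intro b E
    show (x :: (M ++ (b :: E)))[M.length + 1]? = some b
    simpa using ih b E

theorem get_mid {γ : Type _} : ∀ (A M : List γ) (b : γ) (E : List γ),
    (A ++ (M ++ (b :: E)))[A.length + M.length]? = some b := by
  intro A M b E
  induction A with
  | nil => simpa using get_len M b E
  | cons x A ih =>
    show (x :: (A ++ (M ++ (b :: E))))[A.length + 1 + M.length]? = some b
    rw [show A.length + 1 + M.length = (A.length + M.length) + 1 by omega]
    simpa using ih

/-! ### Erasing and copying at the root -/

theorem eraseAtomStep (P : List ℕ) (x : ℕ) (Q : List ℕ) (Γ : List (ℕ × MTree)) :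
    Step (.node (P ++ (x :: Q)) Γ) (.node (P ++ Q) Γ) := by
  have h1 : (P ++ (x :: Q)).eraseIdx (P.length + 1 - 1) = P ++ Q := by
    simp [eraseIdx_append_of_length_le (Nat.le_refl _)]
  have := step_root (RootStep.rhoM (Δ := P ++ (x :: Q)) (Γ := Γ) (i := P.length + 1)
    (by omega) (by simp))
  rwa [h1] at this

theorem eraseDiaStep (P : List (ℕ × MTree)) (x : ℕ × MTree) (Q : List (ℕ × MTree))
    (Δ : List ℕ) : Step (.node Δ (P ++ (x :: Q))) (.node Δ (P ++ Q)) := by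
  have h1 : (P ++ (x :: Q)).eraseIdx (P.length + 1 - 1) = P ++ Q := by
    simp [eraseIdx_append_of_length_le (Nat.le_refl _)]
  have := step_root (RootStep.piM (Δ := Δ) (Γ := P ++ (x :: Q)) (i := P.length + 1)
    (by omega) (by simp))
  rwa [h1] at this

theorem eraseMidAtoms : ∀ (X P E : List ℕ) (Γ : List (ℕ × MTree)),
    Steps (.node (P ++ (X ++ E)) Γ) (.node (P ++ E) Γ) := by
  intro X
  induction X with
  | nil => intro P E Γ; exact .refl
  | cons x X ih =>
    intro P E Γ
    exact Relation.ReflTransGen.head (eraseAtomStep P x (X ++ E) Γ) (ih P E Γ)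

theorem eraseMidDias : ∀ (X P E : List (ℕ × MTree)) (Δ : List ℕ),
    Steps (.node Δ (P ++ (X ++ E))) (.node Δ (P ++ E)) := by
  intro X
  induction X with
  | nil => intro P E Δ; exact .refl
  | cons x X ih =>
    intro P E Δ
    exact Relation.ReflTransGen.head (eraseDiaStep P x (X ++ E) Δ) (ih P E Δ)

theorem copyAtomsG : ∀ (A M E : List ℕ) (Γ : List (ℕ × MTree)),
    Steps (.node (M ++ (A ++ E)) Γ) (.node (A ++ (M ++ (A ++ E))) Γ) := by
  intro A
  induction A with
  | nil => intro M E Γ; exact .refl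
  | cons a A ih =>
    intro M E Γ
    have h1 : Steps (.node (M ++ ((a :: A) ++ E)) Γ)
        (.node (A ++ ((M ++ [a]) ++ (A ++ E))) Γ) := by
      simpa [List.append_assoc] using ih (M ++ [a]) E Γ
    have hget : (A ++ ((M ++ [a]) ++ (A ++ E)))[A.length + M.length + 1 - 1]? = some a := by
      have := get_mid A M a (A ++ E)
      simpa [List.append_assoc] using this
    have h2 : Step (.node (A ++ ((M ++ [a]) ++ (A ++ E))) Γ)
        (.node (a :: (A ++ ((M ++ [a]) ++ (A ++ E)))) Γ) :=
      step_root (RootStep.rhoP (i := A.length + M.length + 1) (by omega) hget)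
    have h3 : Steps (.node (M ++ ((a :: A) ++ E)) Γ)
        (.node (a :: (A ++ ((M ++ [a]) ++ (A ++ E)))) Γ) :=
      Relation.ReflTransGen.tail h1 h2
    simpa [List.append_assoc] using h3

theorem copyDiasG : ∀ (A M E : List (ℕ × MTree)) (Δ : List ℕ),
    Steps (.node Δ (M ++ (A ++ E))) (.node Δ (A ++ (M ++ (A ++ E)))) := by
  intro A
  induction A with
  | nil => intro M E Δ; exact .refl
  | cons a A ih =>
    intro M E Δ
    have h1 : Steps (.node Δ (M ++ ((a :: A) ++ E)))
        (.node Δ (A ++ ((M ++ [a]) ++ (A ++ E)))) := by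
      simpa [List.append_assoc] using ih (M ++ [a]) E Δ
    have hget : (A ++ ((M ++ [a]) ++ (A ++ E)))[A.length + M.length + 1 - 1]? = some a := by
      have := get_mid A M a (A ++ E)
      simpa [List.append_assoc] using this
    have h2 : Step (.node Δ (A ++ ((M ++ [a]) ++ (A ++ E))))
        (.node Δ (a :: (A ++ ((M ++ [a]) ++ (A ++ E))))) :=
      step_root (RootStep.piP (i := A.length + M.length + 1) (by omega) hget)
    have h3 : Steps (.node Δ (M ++ ((a :: A) ++ E)))
        (.node Δ (a :: (A ++ ((M ++ [a]) ++ (A ++ E))))) :=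
      Relation.ReflTransGen.tail h1 h2
    simpa [List.append_assoc] using h3

theorem copySum (T : MTree) : Steps T (T.sum T) := by
  obtain ⟨Δ, Γ⟩ := T
  have h1 : Steps (.node Δ Γ) (.node (Δ ++ Δ) Γ) := by
    simpa using copyAtomsG Δ [] [] Γ
  have h2 : Steps (.node (Δ ++ Δ) Γ) (.node (Δ ++ Δ) (Γ ++ Γ)) := by
    simpa using copyDiasG Γ [] [] (Δ ++ Δ)
  exact Relation.ReflTransGen.trans h1 (by simpa [MTree.sum, Steps] using h2)

theorem eraseSum₁ (T U : MTree) : Steps (T.sum U) T := by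
  obtain ⟨Δ₁, Γ₁⟩ := T; obtain ⟨Δ₂, Γ₂⟩ := U
  have h1 : Steps (.node (Δ₁ ++ Δ₂) (Γ₁ ++ Γ₂)) (.node Δ₁ (Γ₁ ++ Γ₂)) := by
    simpa using eraseMidAtoms Δ₂ Δ₁ [] (Γ₁ ++ Γ₂)
  have h2 : Steps (.node Δ₁ (Γ₁ ++ Γ₂)) (.node Δ₁ Γ₁) := by
    simpa using eraseMidDias Γ₂ Γ₁ [] Δ₁
  exact Relation.ReflTransGen.trans (by simpa [MTree.sum, Steps] using h1) h2

theorem eraseSum₂ (T U : MTree) : Steps (T.sum U) U := by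
  obtain ⟨Δ₁, Γ₁⟩ := T; obtain ⟨Δ₂, Γ₂⟩ := U
  have h1 : Steps (.node (Δ₁ ++ Δ₂) (Γ₁ ++ Γ₂)) (.node Δ₂ (Γ₁ ++ Γ₂)) := by
    simpa using eraseMidAtoms Δ₁ [] Δ₂ (Γ₁ ++ Γ₂)
  have h2 : Steps (.node Δ₂ (Γ₁ ++ Γ₂)) (.node Δ₂ Γ₂) := by
    simpa using eraseMidDias Γ₁ [] Γ₂ Δ₂
  exact Relation.ReflTransGen.trans (by simpa [MTree.sum, Steps] using h1) h2

theorem stepsToTop (T : MTree) : Steps T (.node [] []) := by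
  obtain ⟨Δ, Γ⟩ := T
  have h1 : Steps (.node Δ Γ) (.node [] Γ) := by
    simpa using eraseMidAtoms Δ [] [] Γ
  have h2 : Steps (.node [] Γ) (.node [] []) := by
    simpa using eraseMidDias Γ [] [] ([] : List ℕ)
  exact Relation.ReflTransGen.trans h1 h2

end TRC
namespace TRC
open List

/-! ### Root steps under right append -/

theorem rootSumRight {r Δ₁ Γ₁ U} (Δ₂ : List ℕ) (Γ₂ : List (ℕ × MTree))
    (h : RootStep r (.node Δ₁ Γ₁) U) :
    RootStep r (.node (Δ₁ ++ Δ₂) (Γ₁ ++ Γ₂)) (U.sum (.node Δ₂ Γ₂)) := by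
  cases h with
  | @rhoP _ _ i p hi h =>
    have hb : i - 1 < Δ₁.length := (List.getElem?_eq_some_iff.mp h).1
    have h' : (Δ₁ ++ Δ₂)[i - 1]? = some p := by rw [getElem?_append_left hb]; exact h
    simpa [MTree.sum] using RootStep.rhoP (Γ := Γ₁ ++ Γ₂) hi h'
  | @rhoM _ _ i hi h =>
    have e := eraseIdx_append_of_lt_length h Δ₂
    have := RootStep.rhoM (Δ := Δ₁ ++ Δ₂) (Γ := Γ₁ ++ Γ₂) (i := i) hi
      (by simp; omega)
    rw [e] at this
    simpa [MTree.sum] using this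
  | @sigma _ _ i j x y hi hj hij hx hy =>
    have hbx : i - 1 < Γ₁.length := (List.getElem?_eq_some_iff.mp hx).1
    have hby : j - 1 < Γ₁.length := (List.getElem?_eq_some_iff.mp hy).1
    have hx' : (Γ₁ ++ Γ₂)[i - 1]? = some x := by rw [getElem?_append_left hbx]; exact hx
    have hy' : (Γ₁ ++ Γ₂)[j - 1]? = some y := by rw [getElem?_append_left hby]; exact hy
    have := RootStep.sigma (Δ := Δ₁ ++ Δ₂) hi hj hij hx' hy'
    rw [set_append_left _ _ hby, set_append_left _ _ (by simpa using hbx)] at this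
    simpa [MTree.sum] using this
  | @piP _ _ i x hi hx =>
    have hb : i - 1 < Γ₁.length := (List.getElem?_eq_some_iff.mp hx).1
    have hx' : (Γ₁ ++ Γ₂)[i - 1]? = some x := by rw [getElem?_append_left hb]; exact hx
    simpa [MTree.sum] using RootStep.piP (Δ := Δ₁ ++ Δ₂) hi hx'
  | @piM _ _ i hi h =>
    have e := eraseIdx_append_of_lt_length h Γ₂
    have := RootStep.piM (Δ := Δ₁ ++ Δ₂) (Γ := Γ₁ ++ Γ₂) (i := i) hi (by simp; omega)
    rw [e] at this
    simpa [MTree.sum] using this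
  | @four _ _ i j β Δt Γt S hi hj hΓ hΓt =>
    have hb : i - 1 < Γ₁.length := (List.getElem?_eq_some_iff.mp hΓ).1
    have hΓ' : (Γ₁ ++ Γ₂)[i - 1]? = some (β, MTree.node Δt Γt) := by
      rw [getElem?_append_left hb]; exact hΓ
    have := RootStep.four (Δ := Δ₁ ++ Δ₂) hi hj hΓ' hΓt
    rw [set_append_left _ _ hb] at this
    simpa [MTree.sum] using this
  | @lam _ _ i α β S hi hβ hΓ =>
    have hb : i - 1 < Γ₁.length := (List.getElem?_eq_some_iff.mp hΓ).1
    have hΓ' : (Γ₁ ++ Γ₂)[i - 1]? = some (α, S) := by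
      rw [getElem?_append_left hb]; exact hΓ
    have := RootStep.lam (Δ := Δ₁ ++ Δ₂) hi hβ hΓ'
    rw [set_append_left _ _ hb] at this
    simpa [MTree.sum] using this
  | @jay _ _ i j α β Δt Γt S hi hj hij hβ hΓi hΓj =>
    have hbi : i - 1 < Γ₁.length := (List.getElem?_eq_some_iff.mp hΓi).1
    have hbj : j - 1 < Γ₁.length := (List.getElem?_eq_some_iff.mp hΓj).1
    have hΓi' : (Γ₁ ++ Γ₂)[i - 1]? = some (α, MTree.node Δt Γt) := by
      rw [getElem?_append_left hbi]; exact hΓi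
    have hΓj' : (Γ₁ ++ Γ₂)[j - 1]? = some (β, S) := by
      rw [getElem?_append_left hbj]; exact hΓj
    have := RootStep.jay (Δ := Δ₁ ++ Δ₂) hi hj hij hβ hΓi' hΓj'
    rw [set_append_left _ _ hbi,
      eraseIdx_append_of_lt_length (by simpa using hbj)] at this
    simpa [MTree.sum] using this

/-! ### Root steps under left append (multi-step for `ρ⁺`, `π⁺`) -/

theorem rootSumLeft {r Δ₁ Γ₁ U} (Δ₀ : List ℕ) (Γ₀ : List (ℕ × MTree))
    (h : RootStep r (.node Δ₁ Γ₁) U) :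
    Steps ((MTree.node Δ₀ Γ₀).sum (.node Δ₁ Γ₁)) ((MTree.node Δ₀ Γ₀).sum U) := by
  cases h with
  | @rhoP _ _ i p hi h =>
    -- multi-step: duplicate to front, copy Δ₀ to front, erase the middle Δ₀
    have hget : (Δ₀ ++ Δ₁)[Δ₀.length + i - 1]? = some p := by
      rw [getElem?_append_right (by omega)]
      rw [show Δ₀.length + i - 1 - Δ₀.length = i - 1 by omega]
      exact h
    have s1 : Step (.node (Δ₀ ++ Δ₁) (Γ₀ ++ Γ₁))
        (.node (p :: (Δ₀ ++ Δ₁)) (Γ₀ ++ Γ₁)) :=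
      step_root (RootStep.rhoP (i := Δ₀.length + i) (by omega) hget)
    have s2 : Steps (.node ([p] ++ (Δ₀ ++ Δ₁)) (Γ₀ ++ Γ₁))
        (.node (Δ₀ ++ ([p] ++ (Δ₀ ++ Δ₁))) (Γ₀ ++ Γ₁)) := copyAtomsG Δ₀ [p] Δ₁ _
    have s3 : Steps (.node ((Δ₀ ++ [p]) ++ (Δ₀ ++ Δ₁)) (Γ₀ ++ Γ₁))
        (.node ((Δ₀ ++ [p]) ++ Δ₁) (Γ₀ ++ Γ₁)) := eraseMidAtoms Δ₀ (Δ₀ ++ [p]) Δ₁ _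
    have : Steps (.node (Δ₀ ++ Δ₁) (Γ₀ ++ Γ₁)) (.node ((Δ₀ ++ [p]) ++ Δ₁) (Γ₀ ++ Γ₁)) :=
      Relation.ReflTransGen.head s1
        (Relation.ReflTransGen.trans (by simpa [Steps] using s2) (by simpa [List.append_assoc, Steps] using s3))
    simpa [MTree.sum, List.append_assoc] using this
  | @rhoM _ _ i hi h =>
    have e : (Δ₀ ++ Δ₁).eraseIdx (Δ₀.length + i - 1) = Δ₀ ++ Δ₁.eraseIdx (i - 1) := by
      rw [eraseIdx_append_of_length_le (by omega)]
      congr 1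
      congr 1
      omega
    have := step_root (RootStep.rhoM (Δ := Δ₀ ++ Δ₁) (Γ := Γ₀ ++ Γ₁)
      (i := Δ₀.length + i) (by omega) (by simp; omega))
    rw [e] at this
    exact Relation.ReflTransGen.single (by simpa [MTree.sum] using this)
  | @sigma _ _ i j x y hi hj hij hx hy =>
    have hbx : i - 1 < Γ₁.length := (List.getElem?_eq_some_iff.mp hx).1
    have hby : j - 1 < Γ₁.length := (List.getElem?_eq_some_iff.mp hy).1
    have hx' : (Γ₀ ++ Γ₁)[Γ₀.length + i - 1]? = some x := by
      rw [getElem?_append_right (by omega), show Γ₀.length + i - 1 - Γ₀.length = i - 1 by omega]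
      exact hx
    have hy' : (Γ₀ ++ Γ₁)[Γ₀.length + j - 1]? = some y := by
      rw [getElem?_append_right (by omega), show Γ₀.length + j - 1 - Γ₀.length = j - 1 by omega]
      exact hy
    have := step_root (RootStep.sigma (Δ := Δ₀ ++ Δ₁) (i := Γ₀.length + i) (j := Γ₀.length + j)
      (by omega) (by omega) (by omega) hx' hy')
    rw [set_append_right _ _ (by omega), show Γ₀.length + j - 1 - Γ₀.length = j - 1 by omega,
      set_append_right _ _ (by omega), show Γ₀.length + i - 1 - Γ₀.length = i - 1 by omega]
      at this
    exact Relation.ReflTransGen.single (by simpa [MTree.sum] using this)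
  | @piP _ _ i x hi hx =>
    have hget : (Γ₀ ++ Γ₁)[Γ₀.length + i - 1]? = some x := by
      rw [getElem?_append_right (by omega), show Γ₀.length + i - 1 - Γ₀.length = i - 1 by omega]
      exact hx
    have s1 : Step (.node (Δ₀ ++ Δ₁) (Γ₀ ++ Γ₁))
        (.node (Δ₀ ++ Δ₁) (x :: (Γ₀ ++ Γ₁))) :=
      step_root (RootStep.piP (i := Γ₀.length + i) (by omega) hget)
    have s2 : Steps (.node (Δ₀ ++ Δ₁) ([x] ++ (Γ₀ ++ Γ₁)))
        (.node (Δ₀ ++ Δ₁) (Γ₀ ++ ([x] ++ (Γ₀ ++ Γ₁)))) := copyDiasG Γ₀ [x] Γ₁ _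
    have s3 : Steps (.node (Δ₀ ++ Δ₁) ((Γ₀ ++ [x]) ++ (Γ₀ ++ Γ₁)))
        (.node (Δ₀ ++ Δ₁) ((Γ₀ ++ [x]) ++ Γ₁)) := eraseMidDias Γ₀ (Γ₀ ++ [x]) Γ₁ _
    have : Steps (.node (Δ₀ ++ Δ₁) (Γ₀ ++ Γ₁)) (.node (Δ₀ ++ Δ₁) ((Γ₀ ++ [x]) ++ Γ₁)) :=
      Relation.ReflTransGen.head s1
        (Relation.ReflTransGen.trans (by simpa [Steps] using s2) (by simpa [List.append_assoc, Steps] using s3))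
    simpa [MTree.sum, List.append_assoc] using this
  | @piM _ _ i hi h =>
    have e : (Γ₀ ++ Γ₁).eraseIdx (Γ₀.length + i - 1) = Γ₀ ++ Γ₁.eraseIdx (i - 1) := by
      rw [eraseIdx_append_of_length_le (by omega)]
      congr 1
      congr 1
      omega
    have := step_root (RootStep.piM (Δ := Δ₀ ++ Δ₁) (Γ := Γ₀ ++ Γ₁)
      (i := Γ₀.length + i) (by omega) (by simp; omega))
    rw [e] at this
    exact Relation.ReflTransGen.single (by simpa [MTree.sum] using this)
  | @four _ _ i j β Δt Γt S hi hj hΓ hΓt =>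
    have hb : i - 1 < Γ₁.length := (List.getElem?_eq_some_iff.mp hΓ).1
    have hΓ' : (Γ₀ ++ Γ₁)[Γ₀.length + i - 1]? = some (β, MTree.node Δt Γt) := by
      rw [getElem?_append_right (by omega), show Γ₀.length + i - 1 - Γ₀.length = i - 1 by omega]
      exact hΓ
    have := step_root (RootStep.four (Δ := Δ₀ ++ Δ₁) (i := Γ₀.length + i)
      (by omega) hj hΓ' hΓt)
    rw [set_append_right _ _ (by omega),
      show Γ₀.length + i - 1 - Γ₀.length = i - 1 by omega] at this
    exact Relation.ReflTransGen.single (by simpa [MTree.sum] using this)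
  | @lam _ _ i α β S hi hβ hΓ =>
    have hΓ' : (Γ₀ ++ Γ₁)[Γ₀.length + i - 1]? = some (α, S) := by
      rw [getElem?_append_right (by omega), show Γ₀.length + i - 1 - Γ₀.length = i - 1 by omega]
      exact hΓ
    have := step_root (RootStep.lam (Δ := Δ₀ ++ Δ₁) (i := Γ₀.length + i) (by omega) hβ hΓ')
    rw [set_append_right _ _ (by omega),
      show Γ₀.length + i - 1 - Γ₀.length = i - 1 by omega] at this
    exact Relation.ReflTransGen.single (by simpa [MTree.sum] using this)
  | @jay _ _ i j α β Δt Γt S hi hj hij hβ hΓi hΓj =>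
    have hΓi' : (Γ₀ ++ Γ₁)[Γ₀.length + i - 1]? = some (α, MTree.node Δt Γt) := by
      rw [getElem?_append_right (by omega), show Γ₀.length + i - 1 - Γ₀.length = i - 1 by omega]
      exact hΓi
    have hΓj' : (Γ₀ ++ Γ₁)[Γ₀.length + j - 1]? = some (β, S) := by
      rw [getElem?_append_right (by omega), show Γ₀.length + j - 1 - Γ₀.length = j - 1 by omega]
      exact hΓj
    have := step_root (RootStep.jay (Δ := Δ₀ ++ Δ₁) (i := Γ₀.length + i) (j := Γ₀.length + j)
      (by omega) (by omega) (by omega) hβ hΓi' hΓj')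
    rw [set_append_right _ _ (by omega),
      show Γ₀.length + i - 1 - Γ₀.length = i - 1 by omega,
      eraseIdx_append_of_length_le (by omega),
      show Γ₀.length + j - 1 - Γ₀.length = j - 1 by omega] at this
    exact Relation.ReflTransGen.single (by simpa [MTree.sum] using this)

end TRC
namespace TRC
open List

theorem sumStepsL {T U : MTree} (V : MTree) (h : Step T U) : Steps (T.sum V) (U.sum V) := by
  obtain ⟨Δ₁, Γ₁⟩ := T; obtain ⟨Δ₂, Γ₂⟩ := V
  obtain ⟨r, k, S, hpos, hroot, rfl⟩ := h
  match k with
  | [] =>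
    rw [show (MTree.node Δ₁ Γ₁).subtree [] = MTree.node Δ₁ Γ₁ by simp [MTree.subtree]] at hroot
    rw [show (MTree.node Δ₁ Γ₁).replace S [] = S by simp [MTree.replace]]
    exact Relation.ReflTransGen.single (step_root (rootSumRight Δ₂ Γ₂ hroot))
  | i :: k' =>
    have hpos' : isPosL Γ₁ i k' := by simpa [MTree.IsPos] using hpos
    obtain ⟨L, α, C, R, rfl, hlen, hposC, hsub, hrep⟩ := decompPos Γ₁ i k' hpos'
    rw [show (MTree.node Δ₁ (L ++ (α, C) :: R)).subtree (i :: k') = C.subtree k' by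
      simp [MTree.subtree, hsub]] at hroot
    have hstep : Step C (C.replace S k') := ⟨r, k', S, hposC, hroot, rfl⟩
    have := stepCtx (Δ := Δ₁ ++ Δ₂) (L := L) (α := α) (R := R ++ Γ₂) hstep
    refine Relation.ReflTransGen.single ?_
    rw [show (MTree.node Δ₁ (L ++ (α, C) :: R)).replace S (i :: k')
      = MTree.node Δ₁ (L ++ (α, C.replace S k') :: R) by simp [MTree.replace, hrep]]
    simpa [MTree.sum, List.append_assoc] using this

theorem sumStepsR {T U : MTree} (V : MTree) (h : Step T U) : Steps (V.sum T) (V.sum U) := by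
  obtain ⟨Δ₁, Γ₁⟩ := T; obtain ⟨Δ₀, Γ₀⟩ := V
  obtain ⟨r, k, S, hpos, hroot, rfl⟩ := h
  match k with
  | [] =>
    rw [show (MTree.node Δ₁ Γ₁).subtree [] = MTree.node Δ₁ Γ₁ by simp [MTree.subtree]] at hroot
    rw [show (MTree.node Δ₁ Γ₁).replace S [] = S by simp [MTree.replace]]
    exact rootSumLeft Δ₀ Γ₀ hroot
  | i :: k' =>
    have hpos' : isPosL Γ₁ i k' := by simpa [MTree.IsPos] using hpos
    obtain ⟨L, α, C, R, rfl, hlen, hposC, hsub, hrep⟩ := decompPos Γ₁ i k' hpos'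
    rw [show (MTree.node Δ₁ (L ++ (α, C) :: R)).subtree (i :: k') = C.subtree k' by
      simp [MTree.subtree, hsub]] at hroot
    have hstep : Step C (C.replace S k') := ⟨r, k', S, hposC, hroot, rfl⟩
    have := stepCtx (Δ := Δ₀ ++ Δ₁) (L := Γ₀ ++ L) (α := α) (R := R) hstep
    refine Relation.ReflTransGen.single ?_
    rw [show (MTree.node Δ₁ (L ++ (α, C) :: R)).replace S (i :: k')
      = MTree.node Δ₁ (L ++ (α, C.replace S k') :: R) by simp [MTree.replace, hrep]]
    simpa [MTree.sum, List.append_assoc] using this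

theorem sumStepsLs {T U : MTree} (V : MTree) (h : Steps T U) : Steps (T.sum V) (U.sum V) := by
  induction h with
  | refl => exact .refl
  | tail _ h₂ ih => exact Relation.ReflTransGen.trans ih (sumStepsL V h₂)

theorem sumStepsRs {T U : MTree} (V : MTree) (h : Steps T U) : Steps (V.sum T) (V.sum U) := by
  induction h with
  | refl => exact .refl
  | tail _ h₂ ih => exact Relation.ReflTransGen.trans ih (sumStepsR V h₂)

/-! ### `𝒯 ∘ ℱ = id` -/

theorem bigAnd_var_toTree : ∀ Δ : List ℕ, (bigAnd (Δ.map .var)).toTree = .node Δ [] := by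
  intro Δ
  induction Δ with
  | nil => rfl
  | cons p Δ ih => simp [bigAnd, SPF.toTree, ih, MTree.sum]

mutual
theorem tf : ∀ T : MTree, T.toFormula.toTree = T
  | .node Δ Γ => by
      simp [MTree.toFormula, SPF.toTree, bigAnd_var_toTree, tfL Γ, MTree.sum]
theorem tfL : ∀ Γ : List (ℕ × MTree), (diamL Γ).toTree = .node [] Γ
  | [] => rfl
  | (α, S) :: Γ => by
      simp [diamL, SPF.toTree, tf S, tfL Γ, MTree.sum]
end

/-! ### Completeness -/

theorem rc_complete {φ ψ : SPF} (h : RC φ ψ) : Steps φ.toTree ψ.toTree := by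
  induction h with
  | id => exact .refl
  | topI φ => exact stepsToTop _
  | cut _ _ ih₁ ih₂ => exact Relation.ReflTransGen.trans ih₁ ih₂
  | andE₁ φ ψ => exact eraseSum₁ _ _
  | andE₂ φ ψ => exact eraseSum₂ _ _
  | andI _ _ ih₁ ih₂ =>
    exact Relation.ReflTransGen.trans (copySum _)
      (Relation.ReflTransGen.trans (sumStepsLs _ ih₁) (sumStepsRs _ ih₂))
  | @dist φ ψ α _ ih =>
    have := stepsCtx (Δ := ([] : List ℕ)) (L := []) (α := α) (R := []) ih
    simpa [SPF.toTree] using this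
  | trans α φ =>
    have hstep := step_root (RootStep.four (Δ := []) (Γ := [(α, MTree.node [] [(α, φ.toTree)])])
      (i := 1) (j := 1) (β := α) (Δt := []) (Γt := [(α, φ.toTree)]) (S := φ.toTree)
      (Nat.le_refl _) (Nat.le_refl _) (by simp) (by simp))
    refine Relation.ReflTransGen.single ?_
    simpa [SPF.toTree] using hstep
  | @mono α β φ hβ =>
    have hstep := step_root (RootStep.lam (Δ := []) (Γ := [(α, φ.toTree)]) (i := 1)
      (β := β) (S := φ.toTree) (Nat.le_refl _) hβ (by simp))
    refine Relation.ReflTransGen.single ?_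
    simpa [SPF.toTree] using hstep
  | @jax α β φ ψ hβ =>
    rcases hT : φ.toTree with ⟨Δt, Γt⟩
    have hstep := step_root (RootStep.jay (Δ := [])
      (Γ := [(α, MTree.node Δt Γt), (β, ψ.toTree)]) (i := 1) (j := 2)
      (Δt := Δt) (Γt := Γt) (S := ψ.toTree)
      (by omega) (by omega) (by omega) hβ (by simp) (by simp))
    refine Relation.ReflTransGen.single ?_
    simpa [SPF.toTree, hT, MTree.sum, List.eraseIdx] using hstep

end TRC
/-- (1) `𝒯(φ) ↪* 𝒯(ψ)` implies `φ ⊢_{RC} ψ`;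
(2) `ℱ(T) ⊢_{RC} ℱ(T')` implies `T ↪* T'`. -/
theorem trc_rc_transfer :
    (∀ φ ψ : TRC.SPF, TRC.Steps φ.toTree ψ.toTree → TRC.RC φ ψ) ∧
    (∀ T T' : TRC.MTree, TRC.RC T.toFormula T'.toFormula → TRC.Steps T T') := by
  constructor
  · exact fun φ ψ h => TRC.part1 h
  · intro T T' h
    have := TRC.rc_complete h
    rwa [TRC.tf, TRC.tf] at this
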